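/- arXiv:1210.1414 — 5 statements merged into one kernel-verified Lean document; each statement's English description precedes it below -/
import Mathlib

section
/- Let K be an algebraically closed field and consider two bi-affine equations p₁vx + q₁v + r₁x + s₁ = 0 and p₂vx + q₂v + r₂x + s₂ = 0 in unknowns (v, x) ∈ K². Let R(v) = (p₁v + r₁)(q₂v + s₂) − (p₂v + r₂)(q₁v + s₁). If R has degree exactly 2, its two roots are distinct, and neither root v satisfies p₁v + r₁ = 0, then the set of pairs (v, x) ∈ K² with p₁v + r₁ ≠ 0 satisfying both equations has exactly 2 elements. (Generically the nearly well-posed initial value problem on two such quads has exactly two solutions.) -/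
open Polynomial

/-- Over an algebraically closed field, if the resultant `R(v)` of the two bi-affine
equations has degree exactly 2, two distinct roots, and neither root annihilates
`p₁v + r₁`, then the system has exactly two solutions: generically the nearly
well-posed initial value problem on two quads has exactly two solutions. -/
theorem stmt4 {K : Type*} [Field K] [IsAlgClosed K] (p₁ q₁ r₁ s₁ p₂ q₂ r₂ s₂ : K)
    (R : Polynomial K)
    (hR : R = (C p₁ * X + C r₁) * (C q₂ * X + C s₂)
            - (C p₂ * X + C r₂) * (C q₁ * X + C s₁))
    (hdeg : R.degree = 2)
    (hdist : ∃ v₁ v₂ : K, v₁ ≠ v₂ ∧ R.IsRoot v₁ ∧ R.IsRoot v₂)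
    (hden : ∀ v : K, R.IsRoot v → p₁ * v + r₁ ≠ 0) :
    {vx : K × K | p₁ * vx.1 + r₁ ≠ 0 ∧
        p₁ * vx.1 * vx.2 + q₁ * vx.1 + r₁ * vx.2 + s₁ = 0 ∧
        p₂ * vx.1 * vx.2 + q₂ * vx.1 + r₂ * vx.2 + s₂ = 0}.Finite ∧
      {vx : K × K | p₁ * vx.1 + r₁ ≠ 0 ∧
        p₁ * vx.1 * vx.2 + q₁ * vx.1 + r₁ * vx.2 + s₁ = 0 ∧
        p₂ * vx.1 * vx.2 + q₂ * vx.1 + r₂ * vx.2 + s₂ = 0}.ncard = 2 := by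
  classical
  obtain ⟨v₁, v₂, hne, hr1, hr2⟩ := hdist
  have hR0 : R ≠ 0 := fun h => by simp [h] at hdeg
  have heval : ∀ v : K, R.eval v
      = (p₁ * v + r₁) * (q₂ * v + s₂) - (p₂ * v + r₂) * (q₁ * v + s₁) := by
    intro v; simp [hR]
  -- root characterization: any root equals v₁ or v₂
  have hroots : ∀ v : K, R.IsRoot v → v = v₁ ∨ v = v₂ := by
    intro v hv
    by_contra hcon
    push_neg at hcon
    have h3 : ({v, v₁, v₂} : Finset K).card = 3 := by
      rw [Finset.card_insert_of_notMem (by simp [hcon.1, hcon.2]),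
        Finset.card_insert_of_notMem (by simp [hne]), Finset.card_singleton]
    have hsub : ({v, v₁, v₂} : Finset K) ⊆ R.roots.toFinset := by
      intro a ha
      simp only [Finset.mem_insert, Finset.mem_singleton] at ha
      rw [Multiset.mem_toFinset, Polynomial.mem_roots hR0]
      rcases ha with rfl | rfl | rfl <;> assumption
    have hc := Finset.card_le_card hsub
    have h4 : R.roots.toFinset.card ≤ Multiset.card R.roots := R.roots.toFinset_card_le
    have hle : Multiset.card R.roots ≤ 2 := by
      have h := Polynomial.card_roots hR0
      rw [hdeg] at h
      exact_mod_cast h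
    omega
  have key : ∀ v : K, R.IsRoot v → ∀ x : K,
      (p₁ * v + r₁ ≠ 0 ∧ p₁ * v * x + q₁ * v + r₁ * x + s₁ = 0 ∧
        p₂ * v * x + q₂ * v + r₂ * x + s₂ = 0) ↔ x = -(q₁ * v + s₁) / (p₁ * v + r₁) := by
    intro v hv x
    have hd := hden v hv
    constructor
    · rintro ⟨-, h1, -⟩
      rw [eq_div_iff hd]
      linear_combination h1
    · rintro rfl
      refine ⟨hd, ?_, ?_⟩
      · field_simp
        ring
      · have hRv : (p₁ * v + r₁) * (q₂ * v + s₂) - (p₂ * v + r₂) * (q₁ * v + s₁) = 0 := by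
          rw [← heval]; exact hv
        linear_combination (p₁ * v + r₁)⁻¹ * hRv - (q₂ * v + s₂) * mul_inv_cancel₀ hd
  have hSeq : {vx : K × K | p₁ * vx.1 + r₁ ≠ 0 ∧
        p₁ * vx.1 * vx.2 + q₁ * vx.1 + r₁ * vx.2 + s₁ = 0 ∧
        p₂ * vx.1 * vx.2 + q₂ * vx.1 + r₂ * vx.2 + s₂ = 0}
      = {(v₁, -(q₁ * v₁ + s₁) / (p₁ * v₁ + r₁)), (v₂, -(q₁ * v₂ + s₁) / (p₁ * v₂ + r₁))} := by
    ext ⟨v, x⟩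
    simp only [Set.mem_setOf_eq, Set.mem_insert_iff, Set.mem_singleton_iff, Prod.mk.injEq]
    constructor
    · rintro ⟨h0, h1, h2⟩
      have hv : R.IsRoot v := by
        rw [Polynomial.IsRoot, heval]
        linear_combination (p₁ * v + r₁) * h2 - (p₂ * v + r₂) * h1
      have hx := (key v hv x).1 ⟨h0, h1, h2⟩
      rcases hroots v hv with rfl | rfl
      · exact Or.inl ⟨rfl, hx⟩
      · exact Or.inr ⟨rfl, hx⟩
    · rintro (⟨rfl, rfl⟩ | ⟨rfl, rfl⟩)
      · exact (key v hr1 _).2 rfl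
      · exact (key v hr2 _).2 rfl
  rw [hSeq]
  refine ⟨(Set.finite_singleton _).insert _, ?_⟩
  rw [Set.ncard_pair]
  intro h
  exact hne (congrArg Prod.fst h)
end

section
/- Let K be an algebraically closed field and keep the setting of three relations: Möbius data (a₁,b₁,c₁,d₁), (a₂,b₂,c₂,d₂) with a₁d₁ − b₁c₁ ≠ 0, a₂d₂ − b₂c₂ ≠ 0, a multi-affine g ∈ K[y₁,y₂,y₃], and the polynomial P ∈ K[x] of degree at most 3 satisfying P(x) = (c₁x + d₁)(c₂x + d₂)·g((a₁x + b₁)/(c₁x + d₁), (a₂x + b₂)/(c₂x + d₂), x) whenever c₁x + d₁ ≠ 0 and c₂x + d₂ ≠ 0. If P has degree exactly 3 and has three distinct roots, none of which is a root of (c₁x + d₁)(c₂x + d₂), then the set of triples (v, w, x) ∈ K³ satisfying v(c₁x + d₁) = a₁x + b₁, w(c₂x + d₂) = a₂x + b₂, and g(v, w, x) = 0, with c₁x + d₁ ≠ 0 and c₂x + d₂ ≠ 0, has exactly 3 elements. (Generically the system of three multi-affine equations of Figure 2 has exactly three solutions; the initial value problem is nearly well-posed.) -/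
open MvPolynomial

/-- A polynomial over a commutative ring is multi-affine if it has degree
at most 1 in each variable. -/
def MultiAffine {K : Type*} [CommRing K] {σ : Type*} (f : MvPolynomial σ K) : Prop :=
  ∀ i : σ, f.degreeOf i ≤ 1

/-- Over an algebraically closed field, if the eliminant `P` of the three
multi-affine relations of Figure 2 has degree exactly 3 and three distinct roots,
none of which annihilates `(c₁x + d₁)(c₂x + d₂)`, then the system has exactly
three solutions: the initial value problem is nearly well-posed. -/
theorem stmt6 {K : Type*} [Field K] [IsAlgClosed K] (a₁ b₁ c₁ d₁ a₂ b₂ c₂ d₂ : K)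
    (h₁ : a₁ * d₁ - b₁ * c₁ ≠ 0) (h₂ : a₂ * d₂ - b₂ * c₂ ≠ 0)
    (g : MvPolynomial (Fin 3) K) (hg : MultiAffine g)
    (P : Polynomial K) (hPdeg : P.degree ≤ 3)
    (hP : ∀ x : K, c₁ * x + d₁ ≠ 0 → c₂ * x + d₂ ≠ 0 →
      P.eval x = (c₁ * x + d₁) * (c₂ * x + d₂) *
        eval ![(a₁ * x + b₁) / (c₁ * x + d₁), (a₂ * x + b₂) / (c₂ * x + d₂), x] g)
    (hdeg : P.degree = 3)
    (hroots : ∃ x₁ x₂ x₃ : K, x₁ ≠ x₂ ∧ x₁ ≠ x₃ ∧ x₂ ≠ x₃ ∧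
      P.IsRoot x₁ ∧ P.IsRoot x₂ ∧ P.IsRoot x₃)
    (hden : ∀ x : K, P.IsRoot x → (c₁ * x + d₁) * (c₂ * x + d₂) ≠ 0) :
    {t : K × K × K | c₁ * t.2.2 + d₁ ≠ 0 ∧ c₂ * t.2.2 + d₂ ≠ 0 ∧
        t.1 * (c₁ * t.2.2 + d₁) = a₁ * t.2.2 + b₁ ∧
        t.2.1 * (c₂ * t.2.2 + d₂) = a₂ * t.2.2 + b₂ ∧
        eval ![t.1, t.2.1, t.2.2] g = 0}.Finite ∧
      {t : K × K × K | c₁ * t.2.2 + d₁ ≠ 0 ∧ c₂ * t.2.2 + d₂ ≠ 0 ∧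
        t.1 * (c₁ * t.2.2 + d₁) = a₁ * t.2.2 + b₁ ∧
        t.2.1 * (c₂ * t.2.2 + d₂) = a₂ * t.2.2 + b₂ ∧
        eval ![t.1, t.2.1, t.2.2] g = 0}.ncard = 3 := by
  classical
  obtain ⟨x₁, x₂, x₃, h12, h13, h23, hr1, hr2, hr3⟩ := hroots
  have hP0 : P ≠ 0 := fun h => by simp [h] at hdeg
  have hnat : P.natDegree = 3 := Polynomial.natDegree_eq_of_degree_eq_some hdeg
  have hrootmem : ∀ x : K, P.IsRoot x → x = x₁ ∨ x = x₂ ∨ x = x₃ := by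
    intro x hx
    by_contra hc
    push_neg at hc
    obtain ⟨n1, n2, n3⟩ := hc
    have hsub : ({x, x₁, x₂, x₃} : Finset K) ⊆ P.roots.toFinset := by
      intro y hy
      simp only [Finset.mem_insert, Finset.mem_singleton] at hy
      rcases hy with rfl | rfl | rfl | rfl <;>
        simp only [Multiset.mem_toFinset, Polynomial.mem_roots hP0] <;> assumption
    have hcard : ({x, x₁, x₂, x₃} : Finset K).card = 4 := by
      rw [Finset.card_insert_of_notMem (by simp [n1, n2, n3]),
          Finset.card_insert_of_notMem (by simp [h12, h13]),
          Finset.card_insert_of_notMem (by simp [h23]), Finset.card_singleton]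
    have h1 : P.roots.toFinset.card ≤ Multiset.card P.roots :=
      Multiset.toFinset_card_le _
    have h2 := P.card_roots'
    have h3 := Finset.card_le_card hsub
    omega
  set φ : K → K × K × K := fun x =>
    ((a₁ * x + b₁) / (c₁ * x + d₁), (a₂ * x + b₂) / (c₂ * x + d₂), x) with hφ
  have key : ∀ x : K, P.IsRoot x → c₁ * x + d₁ ≠ 0 ∧ c₂ * x + d₂ ≠ 0 := by
    intro x hx
    have := hden x hx
    exact ⟨left_ne_zero_of_mul this, right_ne_zero_of_mul this⟩
  have hset : {t : K × K × K | c₁ * t.2.2 + d₁ ≠ 0 ∧ c₂ * t.2.2 + d₂ ≠ 0 ∧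
        t.1 * (c₁ * t.2.2 + d₁) = a₁ * t.2.2 + b₁ ∧
        t.2.1 * (c₂ * t.2.2 + d₂) = a₂ * t.2.2 + b₂ ∧
        eval ![t.1, t.2.1, t.2.2] g = 0} = φ '' {x₁, x₂, x₃} := by
    ext ⟨v, w, x⟩
    simp only [Set.mem_setOf_eq, Set.mem_image, Set.mem_insert_iff,
      Set.mem_singleton_iff]
    constructor
    · rintro ⟨hd1, hd2, hv, hw, hgz⟩
      have hv' : v = (a₁ * x + b₁) / (c₁ * x + d₁) := by
        rw [eq_div_iff hd1]; exact hv
      have hw' : w = (a₂ * x + b₂) / (c₂ * x + d₂) := by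
        rw [eq_div_iff hd2]; exact hw
      have hroot : P.IsRoot x := by
        have := hP x hd1 hd2
        rw [← hv', ← hw', hgz, mul_zero] at this
        exact this
      exact ⟨x, hrootmem x hroot, by rw [hφ]; simp [hv', hw']⟩
    · rintro ⟨y, hy, heq⟩
      simp only [hφ, Prod.mk.injEq] at heq
      obtain ⟨hv', hw', rfl⟩ := heq
      have hroot : P.IsRoot y := by rcases hy with rfl | rfl | rfl <;> assumption
      obtain ⟨hd1, hd2⟩ := key y hroot
      have hgz : eval ![(a₁ * y + b₁) / (c₁ * y + d₁),
          (a₂ * y + b₂) / (c₂ * y + d₂), y] g = 0 := by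
        have h := hP y hd1 hd2
        rw [hroot] at h
        exact (mul_eq_zero.mp h.symm).resolve_left (hden y hroot)
      subst hv' hw'
      exact ⟨hd1, hd2, div_mul_cancel₀ _ hd1, div_mul_cancel₀ _ hd2, hgz⟩
  have hinj : Function.Injective φ := fun a b h => congrArg (fun t => t.2.2) h
  rw [hset]
  refine ⟨(((Set.finite_singleton x₃).insert x₂).insert x₁).image φ, ?_⟩
  rw [Set.ncard_image_of_injective _ hinj,
      Set.ncard_insert_of_notMem (by simp [h12, h13])
        ((Set.finite_singleton x₃).insert x₂),
      Set.ncard_insert_of_notMem (by simp [h23]) (Set.finite_singleton x₃),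
      Set.ncard_singleton]
end

section
/- Let K be a field, let (aₐ,bₐ,cₐ,dₐ), (a_b,b_b,c_b,d_b), (a_c,b_c,c_c,d_c) ∈ K⁴ each satisfy ad − bc ≠ 0, and let g ∈ K[y₁,y₂,y₃,y₄] be a multi-affine polynomial. Consider the system in unknowns (u₅,u₆,u₇,u₈) ∈ K⁴: u₅(cₐu₆ + dₐ) = aₐu₆ + bₐ, u₇(c_b u₆ + d_b) = a_b u₆ + b_b, u₈(c_c u₇ + d_c) = a_c u₇ + b_c, and g(u₆,u₇,u₅,u₈) = 0, restricted to the domain where cₐu₆ + dₐ ≠ 0, c_b u₆ + d_b ≠ 0, and c_c u₇ + d_c ≠ 0. Then there exists a polynomial P ∈ K[x] of degree at most 4 whose value at x = u₆ equals the product of the three (cleared) denominators times g evaluated at the corresponding Möbius expressions in u₆, and if P is not the zero polynomial the system has at most 4 solutions. (The initial value problem of Figure 3, four multi-affine relations in four unknowns, has at most four solutions; this does not depend on the integrability of the equation.) -/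
open MvPolynomial

private lemma deg_lin2 {K : Type*} [CommRing K] (a b c d e f : K) :
    (Polynomial.C a * (Polynomial.C b * Polynomial.X + Polynomial.C c) +
      Polynomial.C d * (Polynomial.C e * Polynomial.X + Polynomial.C f)).degree ≤ 1 := by
  refine (Polynomial.degree_add_le _ _).trans (max_le ?_ ?_) <;>
    refine (Polynomial.degree_mul_le _ _).trans ?_ <;>
    exact le_trans (add_le_add Polynomial.degree_C_le Polynomial.degree_linear_le)
      (by rw [zero_add])

private lemma ite_key {K : Type*} [Field K] (n d v : K) (hd : d ≠ 0) (hv : v = n / d)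
    (k : ℕ) (hk : k ≤ 1) : (if k = 0 then d else n) = v ^ k * d := by
  interval_cases k
  · simp
  · simp [hv, div_mul_cancel₀, hd]

/-- The system of four multi-affine relations of Figure 3 (three Möbius relations
expressing `u₅, u₇` in terms of `u₆` and `u₈` in terms of `u₇`, and one multi-affine
relation `g(u₆,u₇,u₅,u₈) = 0`) admits an eliminant polynomial `P ∈ K[x]` of degree
at most 4, whose value at `x = u₆` is the product of the three cleared denominators
times `g` evaluated at the corresponding Möbius expressions; if `P ≠ 0` the system
has at most four solutions. This does not depend on integrability. -/
theorem stmt7 {K : Type*} [Field K]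
    (aa ba ca da ab bb cb db ac bc cc dc : K)
    (ha : aa * da - ba * ca ≠ 0) (hb : ab * db - bb * cb ≠ 0)
    (hc : ac * dc - bc * cc ≠ 0)
    (g : MvPolynomial (Fin 4) K) (hg : MultiAffine g) :
    ∃ P : Polynomial K, P.degree ≤ 4 ∧
      (∀ x : K, ca * x + da ≠ 0 → cb * x + db ≠ 0 →
        cc * ((ab * x + bb) / (cb * x + db)) + dc ≠ 0 →
        P.eval x = (ca * x + da) * (cb * x + db) *
            (cc * (ab * x + bb) + dc * (cb * x + db)) *
          eval ![x, (ab * x + bb) / (cb * x + db), (aa * x + ba) / (ca * x + da),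
            (ac * ((ab * x + bb) / (cb * x + db)) + bc) /
              (cc * ((ab * x + bb) / (cb * x + db)) + dc)] g) ∧
      (P ≠ 0 →
        {t : K × K × K × K | ca * t.2.1 + da ≠ 0 ∧ cb * t.2.1 + db ≠ 0 ∧
            cc * t.2.2.1 + dc ≠ 0 ∧
            t.1 * (ca * t.2.1 + da) = aa * t.2.1 + ba ∧
            t.2.2.1 * (cb * t.2.1 + db) = ab * t.2.1 + bb ∧
            t.2.2.2 * (cc * t.2.2.1 + dc) = ac * t.2.2.1 + bc ∧
            eval ![t.2.1, t.2.2.1, t.1, t.2.2.2] g = 0}.Finite ∧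
          {t : K × K × K × K | ca * t.2.1 + da ≠ 0 ∧ cb * t.2.1 + db ≠ 0 ∧
            cc * t.2.2.1 + dc ≠ 0 ∧
            t.1 * (ca * t.2.1 + da) = aa * t.2.1 + ba ∧
            t.2.2.1 * (cb * t.2.1 + db) = ab * t.2.1 + bb ∧
            t.2.2.2 * (cc * t.2.2.1 + dc) = ac * t.2.2.1 + bc ∧
            eval ![t.2.1, t.2.2.1, t.1, t.2.2.2] g = 0}.ncard ≤ 4) := by
  classical
  set N : Fin 4 → Polynomial K := ![Polynomial.X,
    Polynomial.C ab * Polynomial.X + Polynomial.C bb,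
    Polynomial.C aa * Polynomial.X + Polynomial.C ba,
    Polynomial.C ac * (Polynomial.C ab * Polynomial.X + Polynomial.C bb)
      + Polynomial.C bc * (Polynomial.C cb * Polynomial.X + Polynomial.C db)] with hNdef
  set D : Fin 4 → Polynomial K := ![1,
    Polynomial.C cb * Polynomial.X + Polynomial.C db,
    Polynomial.C ca * Polynomial.X + Polynomial.C da,
    Polynomial.C cc * (Polynomial.C ab * Polynomial.X + Polynomial.C bb)
      + Polynomial.C dc * (Polynomial.C cb * Polynomial.X + Polynomial.C db)] with hDdef
  set P : Polynomial K := ∑ m ∈ g.support, Polynomial.C (g.coeff m) *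
    ∏ i, (if m i = 0 then D i else N i) with hPdef
  have hNdeg : ∀ i, (N i).degree ≤ 1 := by
    intro i
    fin_cases i
    · exact Polynomial.degree_X_le
    · exact Polynomial.degree_linear_le
    · exact Polynomial.degree_linear_le
    · exact deg_lin2 _ _ _ _ _ _
  have hDdeg : ∀ i, (D i).degree ≤ 1 := by
    intro i
    fin_cases i
    · exact Polynomial.degree_one_le.trans (by norm_num)
    · exact Polynomial.degree_linear_le
    · exact Polynomial.degree_linear_le
    · exact deg_lin2 _ _ _ _ _ _
  have hPdeg : P.degree ≤ 4 := by
    refine (Polynomial.degree_sum_le _ _).trans ?_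
    rw [Finset.sup_le_iff]
    intro m _
    refine (Polynomial.degree_mul_le _ _).trans ?_
    have h1 : (∏ i, (if m i = 0 then D i else N i)).degree ≤ 4 := by
      refine (Polynomial.degree_prod_le _ _).trans ?_
      have : ∀ i : Fin 4, (if m i = 0 then D i else N i).degree ≤ 1 := by
        intro i; split <;> [exact hDdeg i; exact hNdeg i]
      calc ∑ i, (if m i = 0 then D i else N i).degree ≤ ∑ _i : Fin 4, (1 : WithBot ℕ) :=
            Finset.sum_le_sum fun i _ => this i
        _ = 4 := by decide
    calc (Polynomial.C (g.coeff m)).degree + (∏ i, (if m i = 0 then D i else N i)).degree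
        ≤ 0 + 4 := add_le_add Polynomial.degree_C_le h1
      _ = 4 := by rw [zero_add]
  have hEval : ∀ x : K, ca * x + da ≠ 0 → cb * x + db ≠ 0 →
      cc * ((ab * x + bb) / (cb * x + db)) + dc ≠ 0 →
      P.eval x = (ca * x + da) * (cb * x + db) *
          (cc * (ab * x + bb) + dc * (cb * x + db)) *
        eval ![x, (ab * x + bb) / (cb * x + db), (aa * x + ba) / (ca * x + da),
          (ac * ((ab * x + bb) / (cb * x + db)) + bc) /
            (cc * ((ab * x + bb) / (cb * x + db)) + dc)] g := by
    intro x h2 h1 h3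
    set v : Fin 4 → K := ![x, (ab * x + bb) / (cb * x + db), (aa * x + ba) / (ca * x + da),
      (ac * ((ab * x + bb) / (cb * x + db)) + bc) /
        (cc * ((ab * x + bb) / (cb * x + db)) + dc)] with hvdef
    have hD3eq : cc * ((ab * x + bb) / (cb * x + db)) + dc =
        (cc * (ab * x + bb) + dc * (cb * x + db)) / (cb * x + db) := by
      rw [eq_div_iff h1]; linear_combination cc * div_mul_cancel₀ (ab * x + bb) h1
    have hD3 : cc * (ab * x + bb) + dc * (cb * x + db) ≠ 0 := by
      intro h
      exact h3 (by rw [hD3eq, h, zero_div])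
    have hDx : ∀ i, (D i).eval x ≠ 0 := by
      intro i
      fin_cases i
      · simp [hDdef]
      · simpa [hDdef] using h1
      · simpa [hDdef] using h2
      · simpa [hDdef] using hD3
    have hvx : ∀ i, v i = (N i).eval x / (D i).eval x := by
      intro i
      fin_cases i
      · simp [hvdef, hNdef, hDdef]
      · simp [hvdef, hNdef, hDdef]
      · simp [hvdef, hNdef, hDdef]
      · have e3 : (N 3).eval x = ac * (ab * x + bb) + bc * (cb * x + db) := by
          simp [hNdef]
        have e3' : (D 3).eval x = cc * (ab * x + bb) + dc * (cb * x + db) := by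
          simp [hDdef]
        show (ac * ((ab * x + bb) / (cb * x + db)) + bc) /
            (cc * ((ab * x + bb) / (cb * x + db)) + dc) = (N 3).eval x / (D 3).eval x
        rw [e3, e3', div_eq_div_iff h3 hD3]
        linear_combination (ac * dc - bc * cc) * div_mul_cancel₀ (ab * x + bb) h1
    rw [hPdef, Polynomial.eval_finset_sum, MvPolynomial.eval_eq', Finset.mul_sum]
    refine Finset.sum_congr rfl fun m hm => ?_
    have hm1 : ∀ i, m i ≤ 1 := fun i => MvPolynomial.degreeOf_le_iff.mp (hg i) m hm
    rw [Polynomial.eval_mul, Polynomial.eval_C, Polynomial.eval_prod]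
    have : ∀ i : Fin 4, (if m i = 0 then D i else N i).eval x = v i ^ m i * (D i).eval x := by
      intro i
      rw [apply_ite (Polynomial.eval x)]
      exact ite_key _ _ _ (hDx i) (hvx i) _ (hm1 i)
    rw [Finset.prod_congr rfl fun i _ => this i, Finset.prod_mul_distrib]
    have hDprod : ∏ i, (D i).eval x =
        (ca * x + da) * (cb * x + db) * (cc * (ab * x + bb) + dc * (cb * x + db)) := by
      rw [Fin.prod_univ_four]
      simp only [hDdef, Matrix.cons_val_zero, Matrix.cons_val_one, Matrix.head_cons,
        Matrix.cons_val_two, Matrix.tail_cons, Matrix.cons_val_three,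
        Polynomial.eval_add, Polynomial.eval_mul, Polynomial.eval_one,
        Polynomial.eval_C, Polynomial.eval_X]
      ring
    rw [hDprod]
    ring
  refine ⟨P, hPdeg, hEval, ?_⟩
  intro hP
  set S := {t : K × K × K × K | ca * t.2.1 + da ≠ 0 ∧ cb * t.2.1 + db ≠ 0 ∧
      cc * t.2.2.1 + dc ≠ 0 ∧
      t.1 * (ca * t.2.1 + da) = aa * t.2.1 + ba ∧
      t.2.2.1 * (cb * t.2.1 + db) = ab * t.2.1 + bb ∧
      t.2.2.2 * (cc * t.2.2.1 + dc) = ac * t.2.2.1 + bc ∧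
      eval ![t.2.1, t.2.2.1, t.1, t.2.2.2] g = 0} with hSdef
  have hroot : ∀ t ∈ S, P.IsRoot t.2.1 := by
    rintro ⟨u5, u6, u7, u8⟩ ⟨h2, h1, h3, e5, e7, e8, e0⟩
    have hu7 : u7 = (ab * u6 + bb) / (cb * u6 + db) := by
      exact (eq_div_iff h1).mpr e7
    have hu5 : u5 = (aa * u6 + ba) / (ca * u6 + da) := by
      exact (eq_div_iff h2).mpr e5
    have hu8 : u8 = (ac * u7 + bc) / (cc * u7 + dc) := by
      exact (eq_div_iff h3).mpr e8
    have h3' : cc * ((ab * u6 + bb) / (cb * u6 + db)) + dc ≠ 0 := hu7 ▸ h3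
    have heq := hEval u6 h2 h1 h3'
    show P.eval u6 = 0
    have hvec : (![u6, (ab * u6 + bb) / (cb * u6 + db), (aa * u6 + ba) / (ca * u6 + da),
        (ac * ((ab * u6 + bb) / (cb * u6 + db)) + bc) /
          (cc * ((ab * u6 + bb) / (cb * u6 + db)) + dc)] : Fin 4 → K) =
        ![u6, u7, u5, u8] := by
      rw [← hu7, ← hu5, ← hu8]
    rw [heq, hvec, e0, mul_zero]
  have hinj : Set.InjOn (fun t : K × K × K × K => t.2.1) S := by
    rintro ⟨u5, u6, u7, u8⟩ ⟨h2, h1, h3, e5, e7, e8, e0⟩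
      ⟨w5, w6, w7, w8⟩ ⟨h2', h1', h3', e5', e7', e8', e0'⟩ hxy
    simp only at hxy
    subst hxy
    have hu7 : u7 = w7 := by
      have := e7.trans e7'.symm
      exact mul_right_cancel₀ h1 this
    have hu5 : u5 = w5 := mul_right_cancel₀ h2 (e5.trans e5'.symm)
    subst hu7
    have hu8 : u8 = w8 := mul_right_cancel₀ h3 (e8.trans e8'.symm)
    simp [hu5, hu8]
  have himage : (fun t : K × K × K × K => t.2.1) '' S ⊆ {x | P.IsRoot x} :=
    Set.image_subset_iff.mpr fun t ht => hroot t ht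
  have hfin : S.Finite :=
    Set.Finite.of_finite_image ((Polynomial.finite_setOf_isRoot hP).subset himage) hinj
  refine ⟨hfin, ?_⟩
  have hcard : S.ncard = ((fun t : K × K × K × K => t.2.1) '' S).ncard :=
    (Set.ncard_image_of_injOn hinj).symm
  rw [hcard]
  have hsub : (fun t : K × K × K × K => t.2.1) '' S ⊆ (P.roots.toFinset : Set K) := by
    intro x hx
    simp only [Finset.coe_sort_coe, Finset.mem_coe, Multiset.mem_toFinset,
      Polynomial.mem_roots hP]
    exact himage hx
  calc ((fun t : K × K × K × K => t.2.1) '' S).ncard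
      ≤ (P.roots.toFinset : Set K).ncard :=
        Set.ncard_le_ncard hsub (P.roots.toFinset.finite_toSet)
    _ = P.roots.toFinset.card := Set.ncard_coe_finset _
    _ ≤ Multiset.card P.roots := Multiset.toFinset_card_le _
    _ ≤ P.natDegree := Polynomial.card_roots' P
    _ ≤ 4 := Polynomial.natDegree_le_iff_degree_le.mpr hPdeg
end

section
/- Let K be a field, α₁, α₂, α₃ ∈ K, and u, u₁, u₂, u₃ ∈ K with u₁ ≠ u₂, u₁ ≠ u₃, u₂ ≠ u₃. Define u₁₂ = u − (α₁ − α₂)/(u₁ − u₂), u₁₃ = u − (α₁ − α₃)/(u₁ − u₃), u₂₃ = u − (α₂ − α₃)/(u₂ − u₃), and assume u₁₂ ≠ u₁₃, u₁₂ ≠ u₂₃, u₁₃ ≠ u₂₃. Then the three values u₁ − (α₂ − α₃)/(u₁₂ − u₁₃), u₂ − (α₁ − α₃)/(u₁₂ − u₂₃), and u₃ − (α₁ − α₂)/(u₁₃ − u₂₃) are all equal. (The discrete potential KdV equation is multi-dimensionally consistent: the value u₁₂₃ at the far corner of a cube can be computed consistently via any of the three faces.) -/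
/-- Multi-dimensional consistency of the discrete potential KdV equation: the
value `u₁₂₃` at the far corner of a cube can be computed consistently via any of
the three top faces. -/
theorem stmt11 {K : Type*} [Field K] (α₁ α₂ α₃ u u₁ u₂ u₃ u₁₂ u₁₃ u₂₃ : K)
    (h12 : u₁ ≠ u₂) (h13 : u₁ ≠ u₃) (h23 : u₂ ≠ u₃)
    (e12 : u₁₂ = u - (α₁ - α₂) / (u₁ - u₂))
    (e13 : u₁₃ = u - (α₁ - α₃) / (u₁ - u₃))
    (e23 : u₂₃ = u - (α₂ - α₃) / (u₂ - u₃))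
    (d1 : u₁₂ ≠ u₁₃) (d2 : u₁₂ ≠ u₂₃) (d3 : u₁₃ ≠ u₂₃) :
    u₁ - (α₂ - α₃) / (u₁₂ - u₁₃) = u₂ - (α₁ - α₃) / (u₁₂ - u₂₃) ∧
      u₁ - (α₂ - α₃) / (u₁₂ - u₁₃) = u₃ - (α₁ - α₂) / (u₁₃ - u₂₃) := by
  have hd12 := sub_ne_zero.mpr h12
  have hd13 := sub_ne_zero.mpr h13
  have hd23 := sub_ne_zero.mpr h23
  have hD1 := sub_ne_zero.mpr d1
  have hD2 := sub_ne_zero.mpr d2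
  have hD3 := sub_ne_zero.mpr d3
  subst e12 e13 e23
  field_simp at hD1 hD2 hD3
  have hN1 := (div_ne_zero_iff.mp hD1).1
  have hN2 := (div_ne_zero_iff.mp hD2).1
  have hN3 := (div_ne_zero_iff.mp hD3).1
  constructor <;> (field_simp; ring)
end

section
/- Let K be a field, α₁, α₂, α₃ ∈ K, and u, u₁, u₂, u₃ ∈ K with u₁ ≠ u₂ and u₁ ≠ u₃. Define u₁₂ = u − (α₁ − α₂)/(u₁ − u₂) and u₁₃ = u − (α₁ − α₃)/(u₁ − u₃), and let D = u₁(α₂ − α₃) + u₂(α₃ − α₁) + u₃(α₁ − α₂). If D ≠ 0, then u₁₂ ≠ u₁₃ and u₁ − (α₂ − α₃)/(u₁₂ − u₁₃) = (u₁u₂(α₂ − α₁) + u₂u₃(α₃ − α₂) + u₃u₁(α₁ − α₃)) / D. In particular, the value u₁₂₃ obtained by solving the discrete potential KdV equation around a cube depends only on (u₁, α₁), (u₂, α₂), (u₃, α₃), is independent of u, and is invariant under simultaneous permutations of the indices 1, 2, 3. -/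
/-- For the discrete potential KdV equation, if
`D = u₁(α₂ - α₃) + u₂(α₃ - α₁) + u₃(α₁ - α₂) ≠ 0` then `u₁₂ ≠ u₁₃` and the value
`u₁₂₃ = u₁ - (α₂ - α₃)/(u₁₂ - u₁₃)` at the far corner of the cube equals
`(u₁u₂(α₂ - α₁) + u₂u₃(α₃ - α₂) + u₃u₁(α₁ - α₃)) / D`; in particular it depends
only on `(u₁,α₁), (u₂,α₂), (u₃,α₃)`, is independent of `u`, and is invariant
under simultaneous permutations of the indices `1, 2, 3`. -/
theorem stmt12 {K : Type*} [Field K] (α₁ α₂ α₃ u u₁ u₂ u₃ u₁₂ u₁₃ D : K)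
    (h12 : u₁ ≠ u₂) (h13 : u₁ ≠ u₃)
    (e12 : u₁₂ = u - (α₁ - α₂) / (u₁ - u₂))
    (e13 : u₁₃ = u - (α₁ - α₃) / (u₁ - u₃))
    (hD : D = u₁ * (α₂ - α₃) + u₂ * (α₃ - α₁) + u₃ * (α₁ - α₂))
    (hD0 : D ≠ 0) :
    u₁₂ ≠ u₁₃ ∧
      u₁ - (α₂ - α₃) / (u₁₂ - u₁₃) =
        (u₁ * u₂ * (α₂ - α₁) + u₂ * u₃ * (α₃ - α₂) + u₃ * u₁ * (α₁ - α₃)) / D := by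
  have ha : u₁ - u₂ ≠ 0 := sub_ne_zero.mpr h12
  have hb : u₁ - u₃ ≠ 0 := sub_ne_zero.mpr h13
  have key : u₁₂ - u₁₃ = D / ((u₁ - u₂) * (u₁ - u₃)) := by
    rw [e12, e13, hD]
    field_simp
    ring
  have hne : u₁₂ - u₁₃ ≠ 0 := by
    rw [key]
    exact div_ne_zero hD0 (mul_ne_zero ha hb)
  refine ⟨sub_ne_zero.mp hne, ?_⟩
  rw [key, div_div_eq_mul_div]
  rw [hD] at hD0 ⊢
  field_simp
  ring
end
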